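/- For every Dyck word x of length 2n and every shift s ∈ {0,...,2n}, the vertex ⟨x,0,s⟩ lies on the f-orbit of ⟨x,0,0⟩; that is, there exists k ≥ 0 with f^k(⟨x,0,0⟩) = ⟨x,0,s⟩. -/
import Mathlib


/-- Every prefix has at least as many 1s (`true`) as 0s (`false`). -/
def IsDyckPrefix (x : List Bool) : Prop :=
  ∀ p : List Bool, p <+: x → p.count false ≤ p.count true

/-- A (balanced) Dyck word. -/
def IsDyckWord (x : List Bool) : Prop :=
  x.count true = x.count false ∧ IsDyckPrefix x

/-- A Dyck word of length `2*n` (so with `n` ones). -/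
def DyckN (n : ℕ) (x : List Bool) : Prop :=
  x.length = 2 * n ∧ x.count true = n ∧ IsDyckPrefix x

/-- Cyclic right rotation by `s` steps. -/
def rotR (s : ℕ) (x : List Bool) : List Bool :=
  x.rotate (x.length - s % x.length)

/-- The map `f` on triples `⟨x,b,s⟩` (nut `x`, bit `b`, shift `s` mod `2n+1`),
relative to the tree rotation `r`:
`f ⟨x,0,s⟩ = ⟨r x, 1, s+1⟩` and `f ⟨x,1,s⟩ = ⟨x,0,s⟩`. -/
def fmap (n : ℕ) (r : List Bool → List Bool) :
    List Bool × Bool × ℕ → List Bool × Bool × ℕ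
  | (x, false, s) => (r x, true, (s + 1) % (2 * n + 1))
  | (x, true, s) => (x, false, s)

lemma count_tf (x : List Bool) : x.count true + x.count false = x.length := by
  induction x with
  | nil => simp
  | cons a t ih => cases a <;> simp [List.count_cons] <;> omega

lemma prefix_split {p u v : List Bool} (h : p <+: u ++ v) :
    p <+: u ∨ ∃ q, q <+: v ∧ p = u ++ q := by
  by_cases hl : p.length ≤ u.length
  · left; exact (List.isPrefix_append_of_length hl).mp h
  · right
    have hu : u <+: p :=
      List.prefix_of_prefix_length_le (u.prefix_append v) h (le_of_not_ge hl)
    obtain ⟨q, rfl⟩ := hu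
    refine ⟨q, ?_, rfl⟩
    obtain ⟨t, ht⟩ := h
    rw [List.append_assoc, List.append_cancel_left_eq] at ht
    exact ⟨t, ht⟩

lemma dyck_nil : IsDyckWord [] := by
  refine ⟨rfl, fun p hp => ?_⟩
  simp [List.eq_nil_of_prefix_nil hp]

lemma dyck_append {u v : List Bool} (hu : IsDyckWord u) (hv : IsDyckWord v) :
    IsDyckWord (u ++ v) := by
  constructor
  · simp [List.count_append, hu.1, hv.1]
  · intro p hp
    rcases prefix_split hp with h | ⟨q, hq, rfl⟩
    · exact hu.2 p h
    · have h1 := hv.2 q hq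
      have h2 := hu.1
      simp only [List.count_append]
      omega

lemma dyck_wrap {u : List Bool} (hu : IsDyckWord u) :
    IsDyckWord ([true] ++ u ++ [false]) := by
  constructor
  · have := hu.1
    simp [List.count_append]
    omega
  · intro p hp
    rcases p with _ | ⟨b, q⟩
    · simp
    · rw [show ([true] ++ u ++ [false] : List Bool) = true :: (u ++ [false]) by simp] at hp
      rw [List.cons_prefix_cons] at hp
      obtain ⟨rfl, hq⟩ := hp
      have hb := hu.1
      rcases prefix_split hq with h | ⟨q', hq', rfl⟩
      · have := hu.2 q h
        simp [List.count_cons]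
        omega
      · have hq'' : q' = [] ∨ q' = [false] := by
          rcases q' with _ | ⟨c, q''⟩
          · exact Or.inl rfl
          · rw [List.cons_prefix_cons] at hq'
            obtain ⟨rfl, h2⟩ := hq'
            simp [List.eq_nil_of_prefix_nil h2]
        rcases hq'' with rfl | rfl <;> simp [List.count_cons, List.count_append] <;> omega

/-- First-return decomposition of a nonempty Dyck word. -/
lemma dyck_decomp {x : List Bool} (hx : IsDyckWord x) (hne : x ≠ []) :
    ∃ a c, IsDyckWord a ∧ IsDyckWord c ∧ x = [true] ++ a ++ [false] ++ c := by
  classical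
  have hex : ∃ k, 0 < k ∧ k ≤ x.length ∧
      (x.take k).count false = (x.take k).count true := by
    refine ⟨x.length, List.length_pos_iff.mpr hne, le_rfl, ?_⟩
    simp [hx.1.symm]
  obtain ⟨hk0, hklen, hkbal⟩ := Nat.find_spec hex
  set k := Nat.find hex with hkdef
  set p := x.take k with hpdef
  have hplen : p.length = k := by
    simp [hpdef, List.length_take]; omega
  have hppre : p <+: x := List.take_prefix k x
  -- last letter of p is false
  have hpne : p ≠ [] := by
    intro h; rw [h] at hplen; simp at hplen; omega
  obtain ⟨q, d, hq⟩ := p.eq_nil_or_concat.resolve_left hpne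
  rw [List.concat_eq_append] at hq
  have hd : d = false := by
    by_contra hdt
    have hdt : d = true := by cases d <;> simp_all
    subst hdt
    have hqpre : q <+: x := List.IsPrefix.trans ⟨[true], hq.symm⟩ hppre
    have h1 := hx.2 q hqpre
    rw [hq] at hkbal
    simp [List.count_append] at hkbal
    omega
  subst hd
  -- q is nonempty and starts with true
  have hqne : q ≠ [] := by
    rintro rfl
    have hpf : p = [false] := by simpa using hq
    have : ([false] : List Bool) <+: x := hpf ▸ hppre
    have := hx.2 [false] this
    simp at this
  obtain ⟨b, a, hba⟩ := List.exists_cons_of_ne_nil hqne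
  have hb : b = true := by
    by_contra hbt
    have hbt : b = false := by cases b <;> simp_all
    subst hbt
    have : ([false] : List Bool) <+: x := by
      refine List.IsPrefix.trans ?_ hppre
      rw [hq, hba]; exact ⟨a ++ [false], by simp⟩
    have := hx.2 [false] this
    simp at this
  subst hb
  have hpform : p = [true] ++ a ++ [false] := by rw [hq, hba]; simp
  have hsplit : p ++ x.drop k = x := List.take_append_drop k x
  refine ⟨a, x.drop k, ?_, ?_, ?_⟩
  · -- a is a Dyck word
    constructor
    · rw [hpform] at hkbal
      simp [List.count_append] at hkbal
      omega
    · intro q0 hq0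
      have hlen0 : q0.length ≤ a.length := hq0.length_le
      have hj : q0.length + 1 < k := by
        have : p.length = a.length + 2 := by rw [hpform]; simp
        omega
      have hpre0 : true :: q0 <+: x := by
        refine List.IsPrefix.trans ?_ hppre
        rw [hpform]
        obtain ⟨t, rfl⟩ := hq0
        exact ⟨t ++ [false], by simp⟩
      have h1 := hx.2 (true :: q0) hpre0
      simp [List.count_cons] at h1
      have hmin := Nat.find_min hex hj
      have htake : x.take (q0.length + 1) = true :: q0 := by
        obtain ⟨t, ht⟩ := hpre0
        rw [← ht, List.take_append_of_le_length (by simp)]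
        simp
      have hne2 : (x.take (q0.length + 1)).count false ≠
          (x.take (q0.length + 1)).count true := by
        intro hcontra
        exact hmin ⟨by omega, by omega, hcontra⟩
      rw [htake] at hne2
      simp [List.count_cons] at hne2
      omega
  · -- drop is a Dyck word
    constructor
    · have h1 := hx.1
      have h2 : p.count true + (x.drop k).count true = x.count true := by
        have := congrArg (List.count true) hsplit
        simpa [List.count_append] using this
      have h3 : p.count false + (x.drop k).count false = x.count false := by
        have := congrArg (List.count false) hsplit
        simpa [List.count_append] using this
      omega
    · intro q0 hq0
      have hpq : p ++ q0 <+: x := by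
        obtain ⟨t, ht⟩ := hq0
        exact ⟨t, by rw [List.append_assoc, ht, hsplit]⟩
      have h1 := hx.2 _ hpq
      simp only [List.count_append] at h1
      omega
  · conv_lhs => rw [← hsplit]
    rw [hpform]

/-- Key lemma: `r` iterated `|u|` times moves `u` past `w`. -/
lemma key_rotate (r : List Bool → List Bool)
    (hr : ∀ u v : List Bool, IsDyckWord u → IsDyckWord v →
      r ([true] ++ u ++ [false] ++ v) = u ++ [true] ++ v ++ [false]) :
    ∀ N u w, u.length ≤ N → IsDyckWord u → IsDyckWord w →
      r^[u.length] (u ++ w) = w ++ u := by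
  intro N
  induction N with
  | zero =>
    intro u w hlen hu hw
    have : u = [] := List.length_eq_zero_iff.mp (Nat.le_zero.mp hlen)
    subst this; simp
  | succ N ih =>
    intro u w hlen hu hw
    rcases eq_or_ne u [] with rfl | hne
    · simp
    obtain ⟨a, c, ha, hc, rfl⟩ := dyck_decomp hu hne
    have hlen2 : ([true] ++ a ++ [false] ++ c).length = a.length + c.length + 2 := by
      simp; omega
    have hcw : IsDyckWord (c ++ w) := dyck_append hc hw
    have hwrap1 : IsDyckWord ([true] ++ (c ++ w) ++ [false]) := dyck_wrap hcw
    have hwa : IsDyckWord (w ++ ([true] ++ a ++ [false])) := dyck_append hw (dyck_wrap ha)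
    have s1 : r (([true] ++ a ++ [false] ++ c) ++ w) = a ++ ([true] ++ (c ++ w) ++ [false]) := by
      have h := hr a (c ++ w) ha hcw
      rw [show ([true] ++ a ++ [false] ++ c) ++ w = [true] ++ a ++ [false] ++ (c ++ w) by simp]
      rw [h]; simp
    have s2 : r^[a.length] (a ++ ([true] ++ (c ++ w) ++ [false]))
        = ([true] ++ (c ++ w) ++ [false]) ++ a := by
      refine ih a _ (by omega) ha hwrap1
    have s3 : r (([true] ++ (c ++ w) ++ [false]) ++ a)
        = c ++ (w ++ ([true] ++ a ++ [false])) := by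
      have h := hr (c ++ w) a hcw ha
      rw [show ([true] ++ (c ++ w) ++ [false]) ++ a
        = [true] ++ (c ++ w) ++ [false] ++ a by simp]
      rw [h]; simp
    have s4 : r^[c.length] (c ++ (w ++ ([true] ++ a ++ [false])))
        = (w ++ ([true] ++ a ++ [false])) ++ c := by
      refine ih c _ (by omega) hc hwa
    rw [hlen2, show a.length + c.length + 2 = c.length + (1 + (a.length + 1)) by omega]
    rw [Function.iterate_add_apply r c.length (1 + (a.length + 1)),
      Function.iterate_add_apply r 1 (a.length + 1), Function.iterate_one,
      Function.iterate_succ_apply r a.length, s1, s2, s3, s4]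
    simp

lemma fmap_two (n : ℕ) (r : List Bool → List Bool) (x : List Bool) (m : ℕ) :
    (fmap n r)^[2 * m] (x, false, 0) = (r^[m] x, false, m % (2 * n + 1)) := by
  induction m with
  | zero => simp
  | succ m ih =>
    rw [show 2 * (m + 1) = 2 + 2 * m by ring, Function.iterate_add_apply, ih]
    show fmap n r (fmap n r (r^[m] x, false, m % (2 * n + 1)))
        = (r^[m + 1] x, false, (m + 1) % (2 * n + 1))
    simp [fmap, Function.iterate_succ_apply', Nat.mod_add_mod]

/-- all shifts of a nut `x` lie on the `f`-orbit of `⟨x,0,0⟩`. -/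
theorem all_shifts_on_orbit (n : ℕ) (hn : 1 ≤ n) (r : List Bool → List Bool)
    (hr : ∀ u v : List Bool, IsDyckWord u → IsDyckWord v →
      r ([true] ++ u ++ [false] ++ v) = u ++ [true] ++ v ++ [false])
    (x : List Bool) (hx : DyckN n x) (s : ℕ) (hs : s ≤ 2 * n) :
    ∃ k : ℕ, (fmap n r)^[k] (x, false, 0) = (x, false, s) := by
  obtain ⟨d, hd⟩ := Nat.le.dest hs
  refine ⟨2 * (2 * n * (d + 1)), ?_⟩
  rw [fmap_two]
  have hxd : IsDyckWord x := by
    refine ⟨?_, hx.2.2⟩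
    have := count_tf x
    have h1 := hx.1
    have h2 := hx.2.1
    omega
  have h2n : r^[2 * n] x = x := by
    have h := key_rotate r hr x.length x [] le_rfl hxd dyck_nil
    simpa [hx.1] using h
  have hmx : ∀ a : ℕ, r^[2 * n * a] x = x := by
    intro a
    induction a with
    | zero => simp
    | succ a iha =>
      rw [show 2 * n * (a + 1) = 2 * n * a + 2 * n by ring,
        Function.iterate_add_apply, h2n, iha]
  have hmod : (2 * n * (d + 1)) % (2 * n + 1) = s := by
    have e1 : 2 * n * (d + 1) = 2 * n * d + 2 * n := by ring
    have e2 : (2 * n + 1) * d = 2 * n * d + d := by ring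
    have e3 : 2 * n * (d + 1) = (2 * n + 1) * d + s := by omega
    rw [e3, Nat.mul_add_mod, Nat.mod_eq_of_lt (by omega)]
  rw [hmx (d + 1), hmod]
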